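/- Determinant solution of HBDE growing in a: let T¹ : ℤ² → ℂ be arbitrary, written T¹_s(u). For integers a ≥ 1 define T^a_s(u) := det( T¹_{s+i−j}(u+i+j−a−1) )_{i,j=1,…,a} and set T⁰_s(u) := 1. Then for every integer a ≥ 1 and all s, u ∈ ℤ: T^a_s(u+1)·T^a_s(u−1) − T^a_{s+1}(u)·T^a_{s−1}(u) = T^{a+1}_s(u)·T^{a−1}_s(u). -/

import Mathlib

/-- The determinant family `T^a_s(u) = det(T¹_{s+i−j}(u+i+j−a−1))_{i,j=1,…,a}`,
with `T⁰_s(u) = 1`. -/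
noncomputable def Tdet (T1 : ℤ → ℤ → ℂ) : ℕ → ℤ → ℤ → ℂ
  | 0, _, _ => 1
  | a + 1, s, u =>
    Matrix.det (Matrix.of fun i j : Fin (a+1) =>
      T1 (s + ((i : ℕ) : ℤ) - ((j : ℕ) : ℤ))
         (u + ((i : ℕ) : ℤ) + ((j : ℕ) : ℤ) - (a : ℤ)))

open Matrix Polynomial

namespace HirotaAux

/-- The equivalence `Fin n ⊕ Fin 2 ≃ Fin (n+2)` sending `inl i ↦ i+1`,
`inr 0 ↦ 0`, `inr 1 ↦ n+1`. -/
def djEquiv (n : ℕ) : Fin n ⊕ Fin 2 ≃ Fin (n + 2) where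
  toFun := Sum.elim (fun i => i.succ.castSucc)
    (fun k => if k = 0 then 0 else Fin.last (n + 1))
  invFun i :=
    if h0 : (i : ℕ) = 0 then Sum.inr 0
    else if hn : (i : ℕ) = n + 1 then Sum.inr 1
    else Sum.inl ⟨(i : ℕ) - 1, by have := i.isLt; omega⟩
  left_inv := by
    rintro (i | k)
    · have hi := i.isLt
      dsimp only [Sum.elim_inl, Fin.coe_castSucc, Fin.val_succ]
      rw [dif_neg (by omega : ¬ (i : ℕ) + 1 = 0), dif_neg (by omega : ¬ (i : ℕ) + 1 = n + 1)]
      exact congrArg _ (Fin.ext (by simp))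
    · fin_cases k <;> simp
  right_inv := by
    intro i
    have hi := i.isLt
    dsimp only
    by_cases h0 : (i : ℕ) = 0
    · rw [dif_pos h0]
      simp only [Sum.elim_inr]; exact Fin.ext h0.symm
    · by_cases hl2 : (i : ℕ) = n + 1
      · rw [dif_neg h0, dif_pos hl2]
        simp only [Sum.elim_inr]; rw [if_neg (by decide)]; exact Fin.ext (by simp [hl2])
      · rw [dif_neg h0, dif_neg hl2]
        simp only [Sum.elim_inl]
        ext
        simp
        omega

lemma djEquiv_inl {n : ℕ} (i : Fin n) : djEquiv n (Sum.inl i) = i.succ.castSucc := rfl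

lemma djEquiv_inr0 {n : ℕ} : djEquiv n (Sum.inr 0) = 0 := by simp [djEquiv]

lemma djEquiv_inr1 {n : ℕ} : djEquiv n (Sum.inr 1) = Fin.last (n + 1) := by simp [djEquiv]

lemma djEquiv_inr0' {n : ℕ} (h : 0 < 2) : djEquiv n (Sum.inr ⟨0, h⟩) = 0 := djEquiv_inr0

lemma djEquiv_inr1' {n : ℕ} (h : 1 < 2) : djEquiv n (Sum.inr ⟨1, h⟩) = Fin.last (n + 1) :=
  djEquiv_inr1

variable {R : Type*} [CommRing R] {n : ℕ}

lemma castSucc_succ_ne_zero (i : Fin n) : (i.succ.castSucc : Fin (n+2)) ≠ 0 := by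
  simp [Fin.ext_iff]

lemma castSucc_succ_ne_last (i : Fin n) : (i.succ.castSucc : Fin (n+2)) ≠ Fin.last (n+1) := by
  simp [Fin.ext_iff]
  omega

lemma castSucc_succ_inj {i j : Fin n}
    (h : (i.succ.castSucc : Fin (n+2)) = j.succ.castSucc) : i = j := by
  have := congrArg Fin.val h
  simp at this
  exact Fin.ext (by omega)

lemma last_ne_zero' : (Fin.last (n+1) : Fin (n+2)) ≠ 0 := by
  simp [Fin.ext_iff]

/-- Key multiplicative form of Desnanot–Jacobi over any commutative ring. -/
lemma dj_mul (M : Matrix (Fin (n + 2)) (Fin (n + 2)) R) :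
    M.det * ((M.submatrix Fin.succ Fin.succ).det *
        (M.submatrix Fin.castSucc Fin.castSucc).det -
      (M.submatrix Fin.succ Fin.castSucc).det *
        (M.submatrix Fin.castSucc Fin.succ).det)
      = M.det * (M.det *
        (M.submatrix (Fin.castSucc ∘ Fin.succ) (Fin.castSucc ∘ Fin.succ)).det) := by
  classical
  have hl0 : (Fin.last (n+1) : Fin (n+2)) ≠ 0 := last_ne_zero'
  -- the auxiliary matrix N
  set N : Matrix (Fin (n+2)) (Fin (n+2)) R := Matrix.of fun i j =>
    if j = 0 then adjugate M i 0
    else if j = Fin.last (n+1) then adjugate M i (Fin.last (n+1))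
    else if i = j then 1 else 0 with hN
  -- the product P = M * N
  set P : Matrix (Fin (n+2)) (Fin (n+2)) R := Matrix.of fun i j =>
    if j = 0 then (if i = 0 then M.det else 0)
    else if j = Fin.last (n+1) then (if i = Fin.last (n+1) then M.det else 0)
    else M i j with hP
  have hMN : M * N = P := by
    ext i j
    rw [Matrix.mul_apply]
    by_cases hj0 : j = 0
    · subst hj0
      have h : ∀ k, M i k * N k 0 = M i k * adjugate M k 0 := by
        intro k; simp [hN]
      rw [Finset.sum_congr rfl fun k _ => h k, ← Matrix.mul_apply, Matrix.mul_adjugate]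
      simp [hP, Matrix.one_apply]
    · by_cases hjl : j = Fin.last (n+1)
      · subst hjl
        have h : ∀ k, M i k * N k (Fin.last (n+1)) =
            M i k * adjugate M k (Fin.last (n+1)) := by
          intro k; simp [hN, hl0]
        rw [Finset.sum_congr rfl fun k _ => h k, ← Matrix.mul_apply, Matrix.mul_adjugate]
        simp [hP, Matrix.one_apply, hl0]
      · have h : ∀ k, M i k * N k j = if k = j then M i j else 0 := by
          intro k
          simp only [hN, Matrix.of_apply]
          rw [if_neg hj0, if_neg hjl]
          by_cases hk : k = j <;> simp [hk]
        rw [Finset.sum_congr rfl fun k _ => h k, Finset.sum_ite_eq' _ j]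
        simp only [hP, Matrix.of_apply]
        rw [if_neg hj0, if_neg hjl]
        simp
  -- determinant of N via block decomposition
  have hdetN : N.det = adjugate M 0 0 * adjugate M (Fin.last (n+1)) (Fin.last (n+1))
      - adjugate M 0 (Fin.last (n+1)) * adjugate M (Fin.last (n+1)) 0 := by
    have hsub : N.submatrix (djEquiv n) (djEquiv n) =
        Matrix.fromBlocks 1
          (Matrix.of fun (i : Fin n) (k : Fin 2) =>
            adjugate M i.succ.castSucc (if k = 0 then 0 else Fin.last (n+1)))
          0 (!![adjugate M 0 0, adjugate M 0 (Fin.last (n+1));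
              adjugate M (Fin.last (n+1)) 0,
              adjugate M (Fin.last (n+1)) (Fin.last (n+1))]) := by
      ext i j
      rcases i with i | k <;> rcases j with j | m
      · -- middle, middle
        simp only [Matrix.submatrix_apply, djEquiv_inl, Matrix.fromBlocks_apply₁₁,
          hN, Matrix.of_apply]
        rw [if_neg (castSucc_succ_ne_zero j), if_neg (castSucc_succ_ne_last j)]
        by_cases hij : i = j
        · simp [hij, Matrix.one_apply]
        · rw [if_neg (fun h => hij (castSucc_succ_inj h)), Matrix.one_apply_ne hij]
      · -- middle, corner
        fin_cases m
        · simp [hN, djEquiv_inl, djEquiv_inr0, djEquiv_inr0']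
        · simp [hN, djEquiv_inl, djEquiv_inr1, djEquiv_inr1', hl0]
      · -- corner, middle
        have h1 := castSucc_succ_ne_zero j
        have h2 := castSucc_succ_ne_last j
        fin_cases k
        · simp only [Matrix.submatrix_apply, djEquiv_inr0, djEquiv_inr0', djEquiv_inl,
            Matrix.fromBlocks_apply₂₁, hN, Matrix.of_apply, Matrix.zero_apply]
          rw [if_neg h1, if_neg h2, if_neg (Ne.symm h1)]
        · simp only [Matrix.submatrix_apply, djEquiv_inr1, djEquiv_inr1', djEquiv_inl,
            Matrix.fromBlocks_apply₂₁, hN, Matrix.of_apply, Matrix.zero_apply]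
          rw [if_neg h1, if_neg h2, if_neg (Ne.symm h2)]
      · -- corner, corner
        fin_cases k <;> fin_cases m <;>
          simp [hN, djEquiv_inr0, djEquiv_inr0', djEquiv_inr1, djEquiv_inr1', hl0]
    rw [← Matrix.det_submatrix_equiv_self (djEquiv n) N, hsub,
      Matrix.det_fromBlocks_zero₂₁, Matrix.det_one, one_mul, Matrix.det_fin_two_of]
  -- determinant of P via block decomposition
  have hdetP : P.det =
      (M.submatrix (Fin.castSucc ∘ Fin.succ) (Fin.castSucc ∘ Fin.succ)).det *
        (M.det * M.det) := by
    have hsub : P.submatrix (djEquiv n) (djEquiv n) =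
        Matrix.fromBlocks
          (M.submatrix (Fin.castSucc ∘ Fin.succ) (Fin.castSucc ∘ Fin.succ)) 0
          (Matrix.of fun (k : Fin 2) (j : Fin n) =>
            M (if k = 0 then 0 else Fin.last (n+1)) j.succ.castSucc)
          (!![M.det, 0; 0, M.det]) := by
      ext i j
      rcases i with i | k <;> rcases j with j | m
      · simp only [Matrix.submatrix_apply, djEquiv_inl, Matrix.fromBlocks_apply₁₁,
          hP, Matrix.of_apply]
        rw [if_neg (castSucc_succ_ne_zero j), if_neg (castSucc_succ_ne_last j)]
        rfl
      · have h1 := castSucc_succ_ne_zero i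
        have h2 := castSucc_succ_ne_last i
        fin_cases m
        · simp only [Matrix.submatrix_apply, djEquiv_inl, djEquiv_inr0, djEquiv_inr0',
            Matrix.fromBlocks_apply₁₂, hP, Matrix.of_apply, Matrix.zero_apply]
          simp [h1]
        · simp only [Matrix.submatrix_apply, djEquiv_inl, djEquiv_inr1, djEquiv_inr1',
            Matrix.fromBlocks_apply₁₂, hP, Matrix.of_apply, Matrix.zero_apply]
          simp [h1, h2, hl0]
      · have h1 := castSucc_succ_ne_zero j
        have h2 := castSucc_succ_ne_last j
        fin_cases k
        · simp only [Matrix.submatrix_apply, djEquiv_inr0, djEquiv_inr0', djEquiv_inl,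
            Matrix.fromBlocks_apply₂₁, hP, Matrix.of_apply]
          rw [if_neg h1, if_neg h2]
          simp
        · simp only [Matrix.submatrix_apply, djEquiv_inr1, djEquiv_inr1', djEquiv_inl,
            Matrix.fromBlocks_apply₂₁, hP, Matrix.of_apply]
          rw [if_neg h1, if_neg h2]
          simp
      · fin_cases k <;> fin_cases m <;>
          simp [hP, djEquiv_inr0, djEquiv_inr0', djEquiv_inr1, djEquiv_inr1', hl0, Ne.symm hl0]
    rw [← Matrix.det_submatrix_equiv_self (djEquiv n) P, hsub,
      Matrix.det_fromBlocks_zero₁₂, Matrix.det_fin_two_of]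
    ring
  have hkey : M.det * N.det = P.det := by rw [← Matrix.det_mul, hMN]
  -- rewrite adjugate entries as signed minors
  have e00 : adjugate M 0 0 = (M.submatrix Fin.succ Fin.succ).det := by
    rw [Matrix.adjugate_fin_succ_eq_det_submatrix]
    simp [Fin.succAbove_zero]
  have ell : adjugate M (Fin.last (n+1)) (Fin.last (n+1)) =
      (M.submatrix Fin.castSucc Fin.castSucc).det := by
    rw [Matrix.adjugate_fin_succ_eq_det_submatrix]
    have hv : ((Fin.last (n+1) : Fin (n+2)) : ℕ) = n + 1 := rfl
    rw [hv, Fin.succAbove_last]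
    rw [show (-1 : R) ^ (n + 1 + (n + 1)) = 1 from Even.neg_one_pow ⟨n+1, rfl⟩, one_mul]
  have e0l : adjugate M 0 (Fin.last (n+1)) =
      (-1 : R) ^ (n+1) * (M.submatrix Fin.castSucc Fin.succ).det := by
    rw [Matrix.adjugate_fin_succ_eq_det_submatrix]
    simp [Fin.succAbove_last, Fin.succAbove_zero]
  have el0 : adjugate M (Fin.last (n+1)) 0 =
      (-1 : R) ^ (n+1) * (M.submatrix Fin.succ Fin.castSucc).det := by
    rw [Matrix.adjugate_fin_succ_eq_det_submatrix]
    simp [Fin.succAbove_last, Fin.succAbove_zero]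
  have hsign : ((-1 : R) ^ (n+1)) * ((-1 : R) ^ (n+1)) = 1 := by
    rw [← pow_add]
    exact Even.neg_one_pow ⟨n+1, rfl⟩
  rw [hdetN, hdetP, e00, ell, e0l, el0] at hkey
  linear_combination hkey + M.det * (M.submatrix Fin.succ Fin.castSucc).det *
    (M.submatrix Fin.castSucc Fin.succ).det * hsign

/-- Desnanot–Jacobi over `ℂ`. -/
lemma dj (M : Matrix (Fin (n + 2)) (Fin (n + 2)) ℂ) :
    (M.submatrix Fin.succ Fin.succ).det * (M.submatrix Fin.castSucc Fin.castSucc).det -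
      (M.submatrix Fin.succ Fin.castSucc).det * (M.submatrix Fin.castSucc Fin.succ).det
      = M.det *
        (M.submatrix (Fin.castSucc ∘ Fin.succ) (Fin.castSucc ∘ Fin.succ)).det := by
  classical
  set M' : Matrix (Fin (n+2)) (Fin (n+2)) ℂ[X] := charmatrix (-M) with hM'
  have hdet : M'.det ≠ 0 := by
    have h : M'.det = (-M).charpoly := rfl
    rw [h]
    exact (Matrix.charpoly_monic (-M)).ne_zero
  have hcancel := mul_left_cancel₀ hdet (dj_mul M')
  -- evaluate at 0
  have hmap : M'.map (evalRingHom 0) = M := by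
    ext i j
    by_cases h : i = j
    · subst h
      simp [hM', charmatrix_apply_eq]
    · simp [hM', charmatrix_apply_ne _ _ _ h]
  have φdet : ∀ (A : Matrix (Fin (n+2)) (Fin (n+2)) ℂ[X]),
      evalRingHom 0 A.det = (A.map (evalRingHom 0)).det := fun A =>
    RingHom.map_det _ A
  have h := congrArg (evalRingHom 0) hcancel
  rw [_root_.map_sub, _root_.map_mul, _root_.map_mul, _root_.map_mul] at h
  rw [RingHom.map_det, RingHom.map_det, RingHom.map_det, RingHom.map_det,
    RingHom.map_det, RingHom.map_det] at h
  simp only [RingHom.mapMatrix_apply] at h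
  rw [← Matrix.submatrix_map, ← Matrix.submatrix_map, ← Matrix.submatrix_map,
    ← Matrix.submatrix_map, ← Matrix.submatrix_map, hmap] at h
  exact h

end HirotaAux

/-- **Determinant solution of HBDE growing in `a`.**
For arbitrary `T¹ : ℤ² → ℂ` the family `T^a_s(u) = det(T¹_{s+i−j}(u+i+j−a−1))_{i,j=1,…,a}`
(`T⁰_s(u) = 1`) satisfies HBDE for every `a ≥ 1` and all `s, u ∈ ℤ`. -/
theorem hirota_det_solution_in_a (T1 : ℤ → ℤ → ℂ) :
    ∀ a : ℕ, 1 ≤ a → ∀ s u : ℤ,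
      Tdet T1 a s (u+1) * Tdet T1 a s (u-1) - Tdet T1 a (s+1) u * Tdet T1 a (s-1) u
        = Tdet T1 (a+1) s u * Tdet T1 (a-1) s u := by
  rintro a ha s u
  obtain ⟨m, rfl⟩ : ∃ m, a = m + 1 := ⟨a - 1, by omega⟩
  set M : Matrix (Fin (m+2)) (Fin (m+2)) ℂ := Matrix.of fun i j =>
    T1 (s + ((i : ℕ) : ℤ) - ((j : ℕ) : ℤ))
       (u + ((i : ℕ) : ℤ) + ((j : ℕ) : ℤ) - ((m+1 : ℕ) : ℤ)) with hM
  have hbig : Tdet T1 (m + 1 + 1) s u = M.det := rfl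
  have h1 : Tdet T1 (m+1) s (u+1) = (M.submatrix Fin.succ Fin.succ).det := by
    show Matrix.det _ = _
    congr 1
    ext i j
    simp only [Matrix.of_apply, Matrix.submatrix_apply, hM, Fin.val_succ]
    congr 1 <;> push_cast <;> ring
  have h2 : Tdet T1 (m+1) s (u-1) = (M.submatrix Fin.castSucc Fin.castSucc).det := by
    show Matrix.det _ = _
    congr 1
    ext i j
    simp only [Matrix.of_apply, Matrix.submatrix_apply, hM, Fin.coe_castSucc]
    congr 1 <;> push_cast <;> ring
  have h3 : Tdet T1 (m+1) (s+1) u = (M.submatrix Fin.succ Fin.castSucc).det := by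
    show Matrix.det _ = _
    congr 1
    ext i j
    simp only [Matrix.of_apply, Matrix.submatrix_apply, hM, Fin.val_succ, Fin.coe_castSucc]
    congr 1 <;> push_cast <;> ring
  have h4 : Tdet T1 (m+1) (s-1) u = (M.submatrix Fin.castSucc Fin.succ).det := by
    show Matrix.det _ = _
    congr 1
    ext i j
    simp only [Matrix.of_apply, Matrix.submatrix_apply, hM, Fin.val_succ, Fin.coe_castSucc]
    congr 1 <;> push_cast <;> ring
  have h5 : Tdet T1 m s u =
      (M.submatrix (Fin.castSucc ∘ Fin.succ) (Fin.castSucc ∘ Fin.succ)).det := by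
    cases m with
    | zero =>
      show (1 : ℂ) = _
      rw [Matrix.det_isEmpty]
    | succ k =>
      show Matrix.det _ = _
      congr 1
      ext i j
      simp only [Matrix.of_apply, Matrix.submatrix_apply, hM, Function.comp_apply,
        Fin.val_succ, Fin.coe_castSucc]
      congr 1 <;> push_cast <;> ring
  simp only [Nat.add_sub_cancel]
  rw [h1, h2, h3, h4, hbig, h5]
  exact HirotaAux.dj M
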